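/- ζ(3) = (5/2) · Σ_{n=1}^∞ (-1)^{n-1} / (n³ · binomial(2n, n)). -/

import Mathlib

open Finset Filter

noncomputable def zcbAT (n k : ℕ) : ℝ :=
  (-1) ^ k * ((Nat.factorial k : ℝ)) ^ 2 * ((Nat.factorial (n - k) : ℝ)) /
    (2 * (k : ℝ) ^ 3 * ((Nat.factorial (n + k) : ℝ)))

noncomputable def zcbVT (n k : ℕ) : ℝ :=
  -((-1) ^ k * ((Nat.factorial k : ℝ)) ^ 2 * ((Nat.factorial (n - k - 1) : ℝ)) /
    ((n : ℝ) ^ 2 * ((Nat.factorial (n + k) : ℝ))))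

noncomputable def zcbA (n : ℕ) : ℝ := ∑ i ∈ Finset.range n, zcbAT n (i + 1)

lemma zcb_fact_pos (m : ℕ) : (0 : ℝ) < (Nat.factorial m : ℝ) := by
  exact_mod_cast Nat.factorial_pos m

lemma zcb_step_pt (k j : ℕ) :
    zcbAT (k + j + 2) (k + 1) - zcbAT (k + j + 1) (k + 1) =
      zcbVT (k + j + 2) (k + 1) - zcbVT (k + j + 2) k := by
  unfold zcbAT zcbVT
  have e1 : k + j + 2 - (k + 1) = j + 1 := by omega
  have e2 : k + j + 1 - (k + 1) = j := by omega
  have e3 : k + j + 2 - (k + 1) - 1 = j := by omega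
  have e4 : k + j + 2 - k - 1 = j + 1 := by omega
  have e5 : k + j + 2 + (k + 1) = (2 * k + j + 2) + 1 := by omega
  have e6 : k + j + 1 + (k + 1) = 2 * k + j + 2 := by omega
  have e7 : k + j + 2 + k = 2 * k + j + 2 := by omega
  rw [e3, e1, e2, e4, e5, e6, e7]
  have hK : ((Nat.factorial k : ℝ)) ≠ 0 := ne_of_gt (zcb_fact_pos k)
  have hJ : ((Nat.factorial j : ℝ)) ≠ 0 := ne_of_gt (zcb_fact_pos j)
  have hF : ((Nat.factorial (2 * k + j + 2) : ℝ)) ≠ 0 := ne_of_gt (zcb_fact_pos _)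
  have hk1 : ((k : ℝ) + 1) ≠ 0 := by positivity
  have hn : ((k : ℝ) + (j : ℝ) + 2) ≠ 0 := by positivity
  have h2 : ((2 : ℝ) * k + j + 3) ≠ 0 := by positivity
  rw [Nat.factorial_succ (2 * k + j + 2), Nat.factorial_succ j, Nat.factorial_succ k]
  push_cast
  field_simp
  ring

lemma zcb_choose_lb (N k : ℕ) (hk : 1 ≤ k) : N + 1 ≤ (N + k).choose k := by
  induction k with
  | zero => omega
  | succ m ih =>
    rcases Nat.eq_zero_or_pos m with hm | hm
    · subst hm; simp
    · have h1 := ih hm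
      have h2 : (N + (m + 1)).choose (m + 1) = (N + m).choose m + (N + m).choose (m + 1) := by
        have : N + (m + 1) = (N + m) + 1 := by omega
        rw [this, Nat.choose_succ_succ']
      omega

lemma zcb_key_ineq (N k : ℕ) (hk : 1 ≤ k) (hkN : k ≤ N) :
    (N + 1) * (Nat.factorial k * (Nat.factorial k * Nat.factorial (N - k))) ≤
      Nat.factorial (N + k) := by
  have h1 : (N + k).choose k * Nat.factorial k * Nat.factorial N = Nat.factorial (N + k) := by
    have := Nat.choose_mul_factorial_mul_factorial (Nat.le_add_left k N)
    simpa [Nat.add_sub_cancel] using this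
  have h2 : N.choose k * Nat.factorial k * Nat.factorial (N - k) = Nat.factorial N :=
    Nat.choose_mul_factorial_mul_factorial hkN
  have h3 : Nat.factorial k * Nat.factorial (N - k) ≤ Nat.factorial N := by
    have hpos : 1 ≤ N.choose k := Nat.choose_pos hkN
    calc Nat.factorial k * Nat.factorial (N - k)
        ≤ N.choose k * (Nat.factorial k * Nat.factorial (N - k)) :=
          Nat.le_mul_of_pos_left _ hpos
      _ = Nat.factorial N := by rw [← h2]; ring
  have h4 : N + 1 ≤ (N + k).choose k := zcb_choose_lb N k hk
  calc (N + 1) * (Nat.factorial k * (Nat.factorial k * Nat.factorial (N - k)))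
      ≤ (N + k).choose k * (Nat.factorial k * Nat.factorial N) := by
        apply Nat.mul_le_mul h4
        exact Nat.mul_le_mul_left _ h3
    _ = Nat.factorial (N + k) := by rw [← h1]; ring

lemma zcb_cube_sum_le (N : ℕ) :
    ∑ i ∈ Finset.range N, (1 : ℝ) / ((i : ℝ) + 1) ^ 3 ≤ 2 - 1 / ((N : ℝ) + 1) := by
  induction N with
  | zero => norm_num
  | succ M ih =>
    rcases Nat.eq_zero_or_pos M with h0 | hM
    · subst h0; norm_num
    · rw [Finset.sum_range_succ]
      have hM1 : (1 : ℝ) ≤ (M : ℝ) := by exact_mod_cast hM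
      have hkey2 : ((M : ℝ) + 1) * ((M : ℝ) + 2) ≤ ((M : ℝ) + 1) ^ 3 := by
        have h2 : ((M : ℝ) + 2) ≤ ((M : ℝ) + 1) ^ 2 := by nlinarith [hM1, sq_nonneg ((M : ℝ) - 1)]
        calc ((M : ℝ) + 1) * ((M : ℝ) + 2) ≤ ((M : ℝ) + 1) * ((M : ℝ) + 1) ^ 2 :=
              mul_le_mul_of_nonneg_left h2 (by positivity)
          _ = ((M : ℝ) + 1) ^ 3 := by ring
      have h1 : (1 : ℝ) / ((M : ℝ) + 1) ^ 3 ≤ 1 / ((M : ℝ) + 1) - 1 / ((M : ℝ) + 2) := by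
        rw [div_sub_div _ _ (by positivity) (by positivity),
          div_le_div_iff₀ (by positivity) (by positivity)]
        nlinarith [hkey2]
      push_cast
      have e : ((M : ℝ) + 1 + 1) = (M : ℝ) + 2 := by ring
      rw [e]
      linarith [ih]

lemma zcb_A_bound (N : ℕ) : |zcbA N| ≤ 1 / ((N : ℝ) + 1) := by
  unfold zcbA
  calc |∑ i ∈ Finset.range N, zcbAT N (i + 1)|
      ≤ ∑ i ∈ Finset.range N, |zcbAT N (i + 1)| := Finset.abs_sum_le_sum_abs _ _
    _ ≤ ∑ i ∈ Finset.range N, (1 / ((N : ℝ) + 1)) * (1 / 2 * (1 / ((i : ℝ) + 1) ^ 3)) := by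
        apply Finset.sum_le_sum
        intro i hi
        have hiN : i < N := Finset.mem_range.mp hi
        set k := i + 1 with hk
        have hk1 : 1 ≤ k := Nat.le_add_left 1 i
        have hkN : k ≤ N := hiN
        have habs : |zcbAT N k| =
            ((Nat.factorial k : ℝ)) ^ 2 * ((Nat.factorial (N - k) : ℝ)) /
              (2 * (k : ℝ) ^ 3 * ((Nat.factorial (N + k) : ℝ))) := by
          unfold zcbAT
          rw [abs_div, abs_mul, abs_mul]
          have hkpos : (0 : ℝ) < (k : ℝ) := by exact_mod_cast Nat.pos_of_ne_zero (by omega)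
          rw [abs_pow, abs_neg, abs_one, one_pow, one_mul]
          rw [abs_of_pos (by positivity : (0:ℝ) < ((Nat.factorial k : ℝ)) ^ 2),
            abs_of_pos (zcb_fact_pos _), abs_of_pos (by positivity)]
        rw [habs]
        have hkey := zcb_key_ineq N k hk1 hkN
        have hkey' : ((N : ℝ) + 1) * (((Nat.factorial k : ℝ)) ^ 2 * ((Nat.factorial (N - k) : ℝ)))
            ≤ ((Nat.factorial (N + k) : ℝ)) := by
          have := (Nat.cast_le (α := ℝ)).mpr hkey
          push_cast at this
          nlinarith [this]
        have hkpos : (0 : ℝ) < (k : ℝ) := by exact_mod_cast Nat.pos_of_ne_zero (by omega)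
        rw [div_le_iff₀ (by positivity)]
        have hik : ((k : ℝ)) = (i : ℝ) + 1 := by push_cast [hk]; ring
        rw [hik]
        have hNf : (0 : ℝ) < ((Nat.factorial (N + k) : ℝ)) := zcb_fact_pos _
        have expand : 1 / ((N : ℝ) + 1) * (1 / 2 * (1 / ((i : ℝ) + 1) ^ 3)) *
            (2 * ((i : ℝ) + 1) ^ 3 * ((Nat.factorial (N + k) : ℝ))) =
            ((Nat.factorial (N + k) : ℝ)) / ((N : ℝ) + 1) := by
          field_simp
        rw [expand, le_div_iff₀ (by positivity)]
        nlinarith [hkey']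
    _ = (1 / ((N : ℝ) + 1)) * (1 / 2 * ∑ i ∈ Finset.range N, (1 / ((i : ℝ) + 1) ^ 3)) := by
        simp only [Finset.mul_sum]
    _ ≤ 1 / ((N : ℝ) + 1) := by
        have h := zcb_cube_sum_le N
        have hN : (0 : ℝ) < 1 / ((N : ℝ) + 1) := by positivity
        have hsle : (1 / 2 : ℝ) * ∑ i ∈ Finset.range N, (1 / ((i : ℝ) + 1) ^ 3) ≤ 1 := by
          nlinarith [h, hN]
        nlinarith [hsle, hN, Finset.sum_nonneg (fun i (_ : i ∈ Finset.range N) =>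
          by positivity : ∀ i ∈ Finset.range N, (0:ℝ) ≤ 1 / ((i : ℝ) + 1) ^ 3)]

lemma zcb_Astep (n : ℕ) :
    zcbA (n + 1) - zcbA n =
      1 / ((n : ℝ) + 1) ^ 3 - 5 / 2 * ((-1 : ℝ) ^ n /
        (((n : ℝ) + 1) ^ 3 * (Nat.choose (2 * (n + 1)) (n + 1) : ℝ))) := by
  have hsplit : zcbA (n + 1) =
      (∑ i ∈ Finset.range n, zcbAT (n + 1) (i + 1)) + zcbAT (n + 1) (n + 1) := by
    unfold zcbA; rw [Finset.sum_range_succ]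
  have hdiff : ∀ i ∈ Finset.range n,
      zcbAT (n + 1) (i + 1) - zcbAT n (i + 1) = zcbVT (n + 1) (i + 1) - zcbVT (n + 1) i := by
    intro i hi
    have hiN : i < n := Finset.mem_range.mp hi
    have h := zcb_step_pt i (n - 1 - i)
    have e : i + (n - 1 - i) + 2 = n + 1 := by omega
    have e' : i + (n - 1 - i) + 1 = n := by omega
    rw [e, e'] at h
    exact h
  have hsum : (∑ i ∈ Finset.range n, zcbAT (n + 1) (i + 1)) - zcbA n =
      zcbVT (n + 1) n - zcbVT (n + 1) 0 := by
    unfold zcbA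
    rw [← Finset.sum_sub_distrib, Finset.sum_congr rfl hdiff, Finset.sum_range_sub]
  have key : zcbA (n + 1) - zcbA n =
      zcbAT (n + 1) (n + 1) + (zcbVT (n + 1) n - zcbVT (n + 1) 0) := by
    rw [hsplit, ← hsum]; ring
  rw [key]
  -- closed forms
  have hchoose : ((Nat.choose (2 * (n + 1)) (n + 1) : ℝ)) *
      ((Nat.factorial (n + 1) : ℝ)) * ((Nat.factorial (n + 1) : ℝ)) =
      ((Nat.factorial (2 * (n + 1)) : ℝ)) := by
    have h := Nat.choose_mul_factorial_mul_factorial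
      (show n + 1 ≤ 2 * (n + 1) by omega)
    have e : 2 * (n + 1) - (n + 1) = n + 1 := by omega
    rw [e] at h
    exact_mod_cast h
  unfold zcbAT zcbVT
  have e1 : n + 1 - (n + 1) = 0 := by omega
  have e2 : n + 1 + (n + 1) = 2 * (n + 1) := by omega
  have e3 : n + 1 - n - 1 = 0 := by omega
  have e4 : n + 1 + n = 2 * n + 1 := by omega
  have e5 : n + 1 - 0 - 1 = n := by omega
  have e6 : n + 1 + 0 = n + 1 := by omega
  rw [e1, e2, e3, e4, e5, e6]
  have hf1 : ((Nat.factorial (2 * (n + 1)) : ℝ)) = (2 * n + 2) * ((Nat.factorial (2 * n + 1) : ℝ)) := by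
    have : 2 * (n + 1) = (2 * n + 1) + 1 := by omega
    rw [this, Nat.factorial_succ]
    push_cast; ring
  have hf2 : ((Nat.factorial (n + 1) : ℝ)) = ((n : ℝ) + 1) * ((Nat.factorial n : ℝ)) := by
    rw [Nat.factorial_succ]; push_cast; ring
  have hcpos : (0 : ℝ) < ((Nat.choose (2 * (n + 1)) (n + 1) : ℝ)) := by
    exact_mod_cast Nat.choose_pos (show n + 1 ≤ 2 * (n + 1) by omega)
  have hfn : ((Nat.factorial n : ℝ)) ≠ 0 := ne_of_gt (zcb_fact_pos n)
  have hf21 : ((Nat.factorial (2 * n + 1) : ℝ)) ≠ 0 := ne_of_gt (zcb_fact_pos _)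
  have hn1 : ((n : ℝ) + 1) ≠ 0 := by positivity
  have hchoose' : ((Nat.choose (2 * (n + 1)) (n + 1) : ℝ)) =
      (2 * (n : ℝ) + 2) * ((Nat.factorial (2 * n + 1) : ℝ)) /
        (((n : ℝ) + 1) * ((Nat.factorial n : ℝ)) * (((n : ℝ) + 1) * ((Nat.factorial n : ℝ)))) := by
    rw [eq_div_iff (by positivity)]
    calc ((Nat.choose (2 * (n + 1)) (n + 1) : ℝ)) *
          (((n : ℝ) + 1) * ((Nat.factorial n : ℝ)) * (((n : ℝ) + 1) * ((Nat.factorial n : ℝ))))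
        = ((Nat.choose (2 * (n + 1)) (n + 1) : ℝ)) *
            ((Nat.factorial (n + 1) : ℝ)) * ((Nat.factorial (n + 1) : ℝ)) := by
          rw [hf2]; ring
      _ = ((Nat.factorial (2 * (n + 1)) : ℝ)) := hchoose
      _ = (2 * (n : ℝ) + 2) * ((Nat.factorial (2 * n + 1) : ℝ)) := hf1
  rw [hchoose', hf1, hf2]
  simp only [Nat.factorial_zero, pow_succ]
  push_cast
  field_simp
  ring

theorem zeta3_central_binomial :
    (∑' n : ℕ, (1 : ℝ) / ((n : ℝ) + 1) ^ 3) =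
      (5 / 2) * ∑' n : ℕ, (-1 : ℝ) ^ n /
        (((n : ℝ) + 1) ^ 3 * (Nat.choose (2 * (n + 1)) (n + 1) : ℝ)) := by
  set f : ℕ → ℝ := fun n => 1 / ((n : ℝ) + 1) ^ 3 with hfdef
  set g : ℕ → ℝ := fun n => (-1 : ℝ) ^ n /
    (((n : ℝ) + 1) ^ 3 * (Nat.choose (2 * (n + 1)) (n + 1) : ℝ)) with hgdef
  have hf : Summable f := by
    have h := (Real.summable_one_div_nat_pow (p := 3)).mpr (by norm_num)
    have h2 := (summable_nat_add_iff (f := fun n : ℕ => 1 / (n : ℝ) ^ 3) 1).mpr h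
    apply h2.congr
    intro n
    simp only [hfdef]
    push_cast
    ring
  have hg : Summable g := by
    apply Summable.of_norm_bounded hf
    intro n
    have hcpos : (1 : ℝ) ≤ ((Nat.choose (2 * (n + 1)) (n + 1) : ℝ)) := by
      exact_mod_cast Nat.one_le_iff_ne_zero.mpr
        (Nat.choose_pos (show n + 1 ≤ 2 * (n + 1) by omega)).ne'
    have hn1 : (0 : ℝ) < ((n : ℝ) + 1) ^ 3 := by positivity
    have hCpos : (0 : ℝ) < ((Nat.choose (2 * (n + 1)) (n + 1) : ℝ)) := by linarith
    have habs : ‖g n‖ = 1 / (((n : ℝ) + 1) ^ 3 * (Nat.choose (2 * (n + 1)) (n + 1) : ℝ)) := by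
      simp only [hgdef, Real.norm_eq_abs, abs_div, abs_pow, abs_neg, abs_one, one_pow,
        abs_mul]
      rw [abs_of_pos (show (0:ℝ) < (n:ℝ) + 1 by positivity), abs_of_pos hCpos]
    rw [habs]
    simp only [hfdef]
    rw [div_le_div_iff₀ (by positivity) hn1]
    nlinarith
  have hfg : Summable (fun n => f n - 5 / 2 * g n) := hf.sub (hg.mul_left _)
  have hps : ∀ N, ∑ n ∈ Finset.range N, (f n - 5 / 2 * g n) = zcbA N := by
    intro N
    have : ∀ n, f n - 5 / 2 * g n = zcbA (n + 1) - zcbA n := fun n => (zcb_Astep n).symm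
    rw [Finset.sum_congr rfl (fun n _ => this n), Finset.sum_range_sub]
    simp [zcbA]
  have hlim : Tendsto (fun N => ∑ n ∈ Finset.range N, (f n - 5 / 2 * g n)) atTop (nhds 0) := by
    simp only [hps]
    apply squeeze_zero_norm zcb_A_bound
    exact tendsto_one_div_add_atTop_nhds_zero_nat
  have hts : ∑' n, (f n - 5 / 2 * g n) = 0 :=
    tendsto_nhds_unique hfg.hasSum.tendsto_sum_nat hlim
  have h1 : ∑' n, (f n - 5 / 2 * g n) = (∑' n, f n) - 5 / 2 * ∑' n, g n := by
    rw [Summable.tsum_sub hf (hg.mul_left _), tsum_mul_left]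
  rw [h1] at hts
  linarith
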